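/- arXiv:1410.2747 — 3 statements merged into one kernel-verified Lean document; each statement's English description precedes it below -/
import Mathlib

section
/- Let G be an abelian transcendental semigroup (a semigroup, under composition, of transcendental entire functions in which every two elements commute). Then the escaping set I(G) is backward invariant under G: for every g ∈ G, g⁻¹(I(G)) ⊆ I(G), i.e. whenever g(w) ∈ I(G) one has w ∈ I(G). -/
open Filter Topology Set Function

noncomputable section

/-- An entire (everywhere differentiable) function that is not a polynomial. -/
def TranscendentalEntire (f : ℂ → ℂ) : Prop :=
  Differentiable ℂ f ∧ ¬ ∃ p : Polynomial ℂ, ∀ z, f z = p.eval z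

/-- A transcendental semigroup: a nonempty set of transcendental entire functions
closed under composition. -/
def IsTranscendentalSemigroup (G : Set (ℂ → ℂ)) : Prop :=
  G.Nonempty ∧ (∀ f ∈ G, TranscendentalEntire f) ∧ ∀ f ∈ G, ∀ g ∈ G, f ∘ g ∈ G

/-- The semigroup is abelian: any two elements commute under composition. -/
def IsAbelianSemigroup (G : Set (ℂ → ℂ)) : Prop :=
  ∀ f ∈ G, ∀ g ∈ G, f ∘ g = g ∘ f

/-- The escaping set of a semigroup `G`: points at which every sequence in `G`
has a subsequence diverging to infinity. -/
def escapingSet (G : Set (ℂ → ℂ)) : Set ℂ :=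
  {z | ∀ s : ℕ → ℂ → ℂ, (∀ k, s k ∈ G) →
    ∃ φ : ℕ → ℕ, StrictMono φ ∧
      Tendsto (fun j => ‖s (φ j) z‖) atTop atTop}

/-- A sequence of functions diverges to ∞ locally uniformly on `U`. -/
def DivergesLocallyUniformlyOn (F : ℕ → ℂ → ℂ) (U : Set ℂ) : Prop :=
  ∀ K ⊆ U, IsCompact K → ∀ R > (0 : ℝ), ∀ᶠ n in atTop, ∀ w ∈ K, R < ‖F n w‖

/-- The Fatou set of a family `G` of entire functions. -/
def FatouSet (G : Set (ℂ → ℂ)) : Set ℂ :=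
  {z | ∃ U : Set ℂ, IsOpen U ∧ z ∈ U ∧ ∀ s : ℕ → ℂ → ℂ, (∀ k, s k ∈ G) →
    ∃ φ : ℕ → ℕ, StrictMono φ ∧
      ((∃ h : ℂ → ℂ, DifferentiableOn ℂ h U ∧
          TendstoLocallyUniformlyOn (fun j => s (φ j)) h atTop U) ∨
        DivergesLocallyUniformlyOn (fun j => s (φ j)) U)}

/-- The Julia set of a family `G`, the complement in `ℂ` of the Fatou set. -/
def JuliaSet (G : Set (ℂ → ℂ)) : Set ℂ := (FatouSet G)ᶜ

/-- The set of (positive) iterates of a single function. -/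
def iteratesSet (f : ℂ → ℂ) : Set (ℂ → ℂ) := {g | ∃ n : ℕ, 0 < n ∧ g = f^[n]}

/-- The Fatou set of a single function, defined via its iterates. -/
def FatouSetFn (f : ℂ → ℂ) : Set ℂ := FatouSet (iteratesSet f)

/-- The Julia set of a single function. -/
def JuliaSetFn (f : ℂ → ℂ) : Set ℂ := (FatouSetFn f)ᶜ

/-- The escaping set of a single function. -/
def escapingSetFn (f : ℂ → ℂ) : Set ℂ :=
  {z | Tendsto (fun n => ‖f^[n] z‖) atTop atTop}

/-- Critical values of `f`. -/
def criticalValues (f : ℂ → ℂ) : Set ℂ := {v | ∃ w, deriv f w = 0 ∧ f w = v}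

/-- Asymptotic values of `f`: limits of `f` along curves tending to infinity. -/
def asymptoticValues (f : ℂ → ℂ) : Set ℂ :=
  {v | ∃ γ : ℝ → ℂ, ContinuousOn γ (Set.Ici (0:ℝ)) ∧
    Tendsto (fun t => ‖γ t‖) atTop atTop ∧
    Tendsto (fun t => f (γ t)) atTop (nhds v)}

/-- `Sing(f⁻¹)`: closure of the set of critical and asymptotic values of `f`. -/
def SingInv (f : ℂ → ℂ) : Set ℂ := closure (criticalValues f ∪ asymptoticValues f)

/-- `f` is of bounded type: `Sing(f⁻¹)` is bounded. -/
def BoundedType (f : ℂ → ℂ) : Prop := Bornology.IsBounded (SingInv f)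

/-- The postsingular set of `f`. -/
def postSing (f : ℂ → ℂ) : Set ℂ := closure (⋃ n : ℕ, f^[n] '' SingInv f)

/-- Membership in the semigroup generated by the functions `g i`:
all finite compositions of generators. -/
inductive InGenSemigroup {n : ℕ} (g : Fin n → ℂ → ℂ) : (ℂ → ℂ) → Prop
  | base (i : Fin n) : InGenSemigroup g (g i)
  | comp (f h : ℂ → ℂ) : InGenSemigroup g f → InGenSemigroup g h → InGenSemigroup g (f ∘ h)

/-- The semigroup generated by `g 1, …, g n`. -/
def genSemigroup {n : ℕ} (g : Fin n → ℂ → ℂ) : Set (ℂ → ℂ) := {f | InGenSemigroup g f}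

/-- `U` is a connected component of the Fatou set of `G`. -/
def IsFatouComponent (G : Set (ℂ → ℂ)) (U : Set ℂ) : Prop :=
  ∃ z ∈ FatouSet G, U = connectedComponentIn (FatouSet G) z

/-- `U` is a wandering domain of `G`: a Fatou component whose images lie in
infinitely many distinct Fatou components. -/
def IsWanderingDomain (G : Set (ℂ → ℂ)) (U : Set ℂ) : Prop :=
  IsFatouComponent G U ∧
    {V : Set ℂ | ∃ g ∈ G, ∃ z ∈ U, V = connectedComponentIn (FatouSet G) (g z)}.Infinite

/-- `G` has no wandering domains. -/
def HasNoWanderingDomains (G : Set (ℂ → ℂ)) : Prop := ∀ U : Set ℂ, ¬ IsWanderingDomain G U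

/-- `z` is a rationally indifferent periodic point of `f`. -/
def IsRatIndiffPeriodic (f : ℂ → ℂ) (z : ℂ) : Prop :=
  ∃ p : ℕ, 0 < p ∧ f^[p] z = z ∧ ∃ k : ℕ, 0 < k ∧ (deriv (f^[p]) z) ^ k = 1

/-- `z` is a repelling periodic point of `f`. -/
def IsRepellingPeriodic (f : ℂ → ℂ) (z : ℂ) : Prop :=
  ∃ p : ℕ, 0 < p ∧ f^[p] z = z ∧ 1 < ‖deriv (f^[p]) z‖

/-- `ψ` is a limit function of the sequence `F` on `V`: some subsequence converges
locally uniformly to `ψ` on `V`. -/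
def IsLimitFunctionOn (F : ℕ → ℂ → ℂ) (ψ : ℂ → ℂ) (V : Set ℂ) : Prop :=
  ∃ φ : ℕ → ℕ, StrictMono φ ∧ TendstoLocallyUniformlyOn (fun j => F (φ j)) ψ atTop V

/-- `f` is hyperbolic: its postsingular set is a compact subset of its Fatou set. -/
def IsHyperbolic (f : ℂ → ℂ) : Prop :=
  IsCompact (postSing f) ∧ postSing f ⊆ FatouSetFn f

/-- The postsingular set of a semigroup `G`. -/
def postSingSemigroup (G : Set (ℂ → ℂ)) : Set ℂ := closure (⋃ f ∈ G, SingInv f)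

/-- A set `S` is finite and consists only of rationally indifferent or repelling
periodic points of `f` and preimages (under iterates of `f`) of such points. -/
def FinitePreperiodicRI (f : ℂ → ℂ) (S : Set ℂ) : Prop :=
  S.Finite ∧ ∀ w ∈ S, ∃ m : ℕ,
    IsRatIndiffPeriodic f (f^[m] w) ∨ IsRepellingPeriodic f (f^[m] w)

end

lemma aux_abs (g : ℂ → ℂ) (hg : Continuous g) (z : ℕ → ℂ)
    (h : Tendsto (fun j => ‖g (z j)‖) atTop atTop) :
    Tendsto (fun j => ‖z j‖) atTop atTop := by
  rw [tendsto_norm_atTop_iff_cobounded] at h ⊢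
  rw [Metric.cobounded_eq_cocompact] at h ⊢
  rw [hasBasis_cocompact.tendsto_right_iff] at h ⊢
  intro K hK
  filter_upwards [h (g '' K) (hK.image hg)] with j hj
  exact fun hz => hj (mem_image_of_mem g hz)

/-- For an abelian transcendental semigroup `G`, the escaping set
`I(G)` is backward invariant under `G`. -/
theorem escapingSet_backward_invariant_of_abelian
    (G : Set (ℂ → ℂ)) (hG : IsTranscendentalSemigroup G) (hab : IsAbelianSemigroup G) :
    ∀ g ∈ G, g ⁻¹' escapingSet G ⊆ escapingSet G := by
  intro g hg w hw s hs
  obtain ⟨φ, hφ, htend⟩ := hw s hs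
  refine ⟨φ, hφ, ?_⟩
  have hgc : Continuous g := ((hG.2.1 g hg).1).continuous
  apply aux_abs g hgc
  have : ∀ j, s (φ j) (g w) = g (s (φ j) w) := by
    intro j
    have := hab (s (φ j)) (hs (φ j)) g hg
    exact congrFun this w
  simpa only [this] using htend
end

section
/- Let f and g be permutable transcendental entire functions of bounded type (f ∘ g = g ∘ f). Suppose f(Sing(g⁻¹)) ⊆ Sing(g⁻¹) and g(Sing(f⁻¹)) ⊆ Sing(f⁻¹). Then the postsingular sets satisfy P(f ∘ g) ⊆ P(f) ∪ P(g). -/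
open Filter Topology Set Function

section AuxProofs

private lemma crit_comp (f g : ℂ → ℂ) (hf : Differentiable ℂ f) (hg : Differentiable ℂ g) :
    criticalValues (f ∘ g) ⊆ criticalValues f ∪ f '' criticalValues g := by
  rintro v ⟨w, hd, hv⟩
  rw [deriv_comp w (hf.differentiableAt) (hg.differentiableAt)] at hd
  rcases mul_eq_zero.mp hd with h | h
  · exact Or.inl ⟨g w, h, hv⟩
  · exact Or.inr ⟨g w, ⟨w, h, rfl⟩, hv⟩

private lemma asymp_comp (f g : ℂ → ℂ) (hf : Differentiable ℂ f) (hg : Differentiable ℂ g)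
    (hfc : ¬ ∃ p : Polynomial ℂ, ∀ z, f z = p.eval z) :
    asymptoticValues (f ∘ g) ⊆ asymptoticValues f ∪ f '' asymptoticValues g := by
  rintro v ⟨γ, hγc, hginf, hlim⟩
  set δ : ℝ → ℂ := fun t => g (γ t) with hδdef
  have hδc : ContinuousOn δ (Set.Ici (0:ℝ)) := hg.continuous.comp_continuousOn hγc
  have hlim' : Tendsto (fun t => f (δ t)) atTop (nhds v) := hlim
  by_cases h : Tendsto (fun t => ‖δ t‖) atTop atTop
  · exact Or.inl ⟨δ, hδc, h, hlim'⟩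
  -- otherwise, pick a bounded subsequence along times tending to infinity
  rw [tendsto_atTop] at h
  push_neg at h
  obtain ⟨R, hR⟩ := h
  replace hR : ∃ᶠ x in atTop, ¬ R ≤ ‖δ x‖ := hR.mono fun x hx => not_le.mpr hx
  have hseq : ∀ n : ℕ, ∃ t : ℝ, (n:ℝ) ≤ t ∧ ‖δ t‖ < R := by
    intro n
    obtain ⟨t, ht1, ht2⟩ := Filter.frequently_atTop.mp hR (n:ℝ)
    exact ⟨t, ht1, lt_of_not_ge ht2⟩
  choose t ht1 ht2 using hseq
  have htt : Tendsto t atTop atTop :=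
    tendsto_atTop_mono ht1 tendsto_natCast_atTop_atTop
  have hball : ∀ n, δ (t n) ∈ Metric.closedBall (0:ℂ) R := by
    intro n
    simp only [Metric.mem_closedBall, Complex.dist_eq, sub_zero]
    exact (ht2 n).le
  obtain ⟨w, -, φ, hφ, hwlim⟩ :=
    (isCompact_closedBall (0:ℂ) R).tendsto_subseq hball
  have htφ : Tendsto (fun n => t (φ n)) atTop atTop := htt.comp hφ.tendsto_atTop
  have hfw : f w = v := by
    have h1 : Tendsto (fun n => f (δ (t (φ n)))) atTop (nhds (f w)) :=
      (hf.continuous.tendsto w).comp hwlim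
    have h2 : Tendsto (fun n => f (δ (t (φ n)))) atTop (nhds v) := hlim'.comp htφ
    exact tendsto_nhds_unique h1 h2
  -- isolated preimage of v at w
  have hiso : ∀ᶠ z in 𝓝[≠] w, f z ≠ v := by
    have hsub : AnalyticAt ℂ (fun z => f z - v) w := (hf.analyticAt w).sub analyticAt_const
    rcases hsub.eventually_eq_zero_or_eventually_ne_zero with hz | hz
    · exfalso
      apply hfc
      have heq : f = fun _ => v := by
        apply AnalyticOnNhd.eq_of_eventuallyEq (fun z _ => hf.analyticAt z)
          (fun z _ => analyticAt_const)
        · filter_upwards [hz] with z hz'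
          exact sub_eq_zero.mp hz'
      exact ⟨Polynomial.C v, fun z => by rw [heq, Polynomial.eval_C]⟩
    · filter_upwards [hz] with z hz'
      exact sub_ne_zero.mp hz'
  rw [eventually_nhdsWithin_iff] at hiso
  obtain ⟨r₀, hr₀, hballiso⟩ := Metric.eventually_nhds_iff.mp hiso
  -- show that δ tends to w
  have hδw : Tendsto δ atTop (nhds w) := by
    rw [Metric.tendsto_nhds]
    intro ε hε
    set r : ℝ := min ε r₀ / 2 with hrdef
    have hr : 0 < r := by positivity
    have hrε : r < ε := by
      rw [hrdef]; have := min_le_left ε r₀; linarith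
    have hrr₀ : r < r₀ := by
      rw [hrdef]; have := min_le_right ε r₀; linarith
    -- minimum of dist (f z) v on the sphere of radius r
    have hsne : (Metric.sphere w r).Nonempty := NormedSpace.sphere_nonempty.mpr hr.le
    obtain ⟨z₀, hz₀S, hz₀min⟩ := (isCompact_sphere w r).exists_isMinOn hsne
      ((hf.continuous.dist continuous_const).continuousOn)
    set m : ℝ := dist (f z₀) v with hmdef
    have hm : 0 < m := by
      rw [hmdef, dist_pos]
      apply hballiso
      · rw [Complex.dist_eq]
        have := Metric.mem_sphere.mp hz₀S
        rw [Complex.dist_eq] at this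
        rw [this]; exact hrr₀
      · intro hzw
        have := Metric.mem_sphere.mp hz₀S
        rw [hzw, dist_self] at this
        exact hr.ne this
    obtain ⟨T, hT⟩ := (Metric.tendsto_nhds.mp hlim' m hm).exists_forall_of_atTop
    -- find a time t* ≥ max T 0 where δ is r-close to w
    have hev : ∀ᶠ n in atTop, dist (δ (t (φ n))) w < r ∧ max T 0 ≤ t (φ n) := by
      filter_upwards [Metric.tendsto_nhds.mp hwlim r hr,
        htφ.eventually (eventually_ge_atTop (max T 0))] with n h1 h2
      exact ⟨h1, h2⟩
    obtain ⟨n, hn1, hn2⟩ := hev.exists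
    set t0 : ℝ := t (φ n) with ht0def
    have ht00 : (0:ℝ) ≤ t0 := le_trans (le_max_right T 0) hn2
    have ht0T : T ≤ t0 := le_trans (le_max_left T 0) hn2
    -- claim: δ stays within r of w for all later times
    filter_upwards [eventually_ge_atTop t0] with s hs
    have key : dist (δ s) w < r := by
      by_contra hcon
      push_neg at hcon
      have hIcc : Set.Icc t0 s ⊆ Set.Ici (0:ℝ) := fun u hu => le_trans ht00 hu.1
      have hcontd : ContinuousOn (fun u => dist (δ u) w) (Set.Icc t0 s) :=
        ((continuous_id.dist continuous_const).comp_continuousOn (hδc.mono hIcc))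
      have hrmem : r ∈ Set.Icc (dist (δ t0) w) (dist (δ s) w) := ⟨hn1.le, hcon⟩
      obtain ⟨u, huI, hu⟩ := intermediate_value_Icc hs hcontd hrmem
      have huS : δ u ∈ Metric.sphere w r := Metric.mem_sphere.mpr hu
      have h1 : m ≤ dist (f (δ u)) v := hz₀min huS
      have h2 : dist (f (δ u)) v < m := hT u (le_trans ht0T huI.1)
      linarith
    exact lt_trans key hrε
  exact Or.inr ⟨w, ⟨γ, hγc, hginf, hδw⟩, hfw⟩

private lemma singInv_comp (f g : ℂ → ℂ) (hf : Differentiable ℂ f) (hg : Differentiable ℂ g)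
    (hfc : ¬ ∃ p : Polynomial ℂ, ∀ z, f z = p.eval z)
    (h1 : f '' SingInv g ⊆ SingInv g) :
    SingInv (f ∘ g) ⊆ SingInv f ∪ SingInv g := by
  have hclosed : IsClosed (SingInv f ∪ SingInv g) := isClosed_closure.union isClosed_closure
  apply closure_minimal _ hclosed
  rintro v (hv | hv)
  · rcases crit_comp f g hf hg hv with h | ⟨x, hx, rfl⟩
    · exact Or.inl (subset_closure (Or.inl h))
    · exact Or.inr (h1 ⟨x, subset_closure (Or.inl hx), rfl⟩)
  · rcases asymp_comp f g hf hg hfc hv with h | ⟨x, hx, rfl⟩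
    · exact Or.inl (subset_closure (Or.inr h))
    · exact Or.inr (h1 ⟨x, subset_closure (Or.inr hx), rfl⟩)

private lemma iter_image_subset (g : ℂ → ℂ) (S : Set ℂ) (h : g '' S ⊆ S) :
    ∀ n : ℕ, ∀ x ∈ S, g^[n] x ∈ S := by
  intro n
  induction n with
  | zero => intro x hx; simpa using hx
  | succ k ih =>
    intro x hx
    rw [Function.iterate_succ_apply]
    exact ih (g x) (h ⟨x, hx, rfl⟩)

end AuxProofs

/-- For permutable transcendental entire functions `f, g` of bounded type
with `f(Sing(g⁻¹)) ⊆ Sing(g⁻¹)` and `g(Sing(f⁻¹)) ⊆ Sing(f⁻¹)`, one has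
`P(f∘g) ⊆ P(f) ∪ P(g)`. -/
theorem postSing_comp_subset
    (f g : ℂ → ℂ) (hf : TranscendentalEntire f) (hg : TranscendentalEntire g)
    (hperm : f ∘ g = g ∘ f) (hbf : BoundedType f) (hbg : BoundedType g)
    (h1 : f '' SingInv g ⊆ SingInv g) (h2 : g '' SingInv f ⊆ SingInv f) :
    postSing (f ∘ g) ⊆ postSing f ∪ postSing g := by
  have hfd := hf.1
  have hgd := hg.1
  have hcomm : Function.Commute f g := fun x => congrFun hperm x
  have hiter1 : ∀ n : ℕ, (f ∘ g)^[n] = f^[n] ∘ g^[n] := fun n => hcomm.comp_iterate n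
  have hiter2 : ∀ n : ℕ, (f ∘ g)^[n] = g^[n] ∘ f^[n] := by
    intro n
    rw [hperm]
    exact hcomm.symm.comp_iterate n
  have hsing : SingInv (f ∘ g) ⊆ SingInv f ∪ SingInv g :=
    singInv_comp f g hfd hgd hf.2 h1
  have hclosed : IsClosed (postSing f ∪ postSing g) := isClosed_closure.union isClosed_closure
  apply closure_minimal _ hclosed
  intro x hx
  simp only [Set.mem_iUnion, Set.mem_image] at hx
  obtain ⟨n, y, hy, rfl⟩ := hx
  rcases hsing hy with h | h
  · left
    apply subset_closure
    simp only [Set.mem_iUnion, Set.mem_image]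
    refine ⟨n, g^[n] y, iter_image_subset g (SingInv f) h2 n y h, ?_⟩
    rw [hiter1 n]; rfl
  · right
    apply subset_closure
    simp only [Set.mem_iUnion, Set.mem_image]
    refine ⟨n, f^[n] y, iter_image_subset f (SingInv g) h1 n y h, ?_⟩
    rw [hiter2 n]; rfl
end

section
/- Let g_1, …, g_n be pairwise permutable transcendental entire functions of bounded type (g_i ∘ g_j = g_j ∘ g_i for all i, j) satisfying g_i(Sing(g_j⁻¹)) ⊆ Sing(g_j⁻¹) for all 1 ≤ i, j ≤ n with i ≠ j. Then P(g_1 ∘ ⋯ ∘ g_n) ⊆ ⋃_{i=1}^{n} P(g_i). -/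
open Filter Topology Set Function

/-- Oscillation lemma: if `f ∘ σ → v` along a curve whose distance to `c`
oscillates across `[r₁, r₂]`, then `f ≡ v`. -/
lemma const_of_oscillation {f : ℂ → ℂ} (hf : Differentiable ℂ f)
    {σ : ℝ → ℂ} (hσ : ContinuousOn σ (Ici (0:ℝ)))
    {v : ℂ} (hv : Tendsto (fun t => f (σ t)) atTop (𝓝 v))
    (c : ℂ) {r₁ r₂ : ℝ} (h12 : r₁ < r₂)
    (hfr₁ : ∃ᶠ t in atTop, ‖σ t - c‖ < r₁)
    (hfr₂ : ∃ᶠ t in atTop, r₂ < ‖σ t - c‖) :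
    ∀ z, f z = v := by
  have hφc : ContinuousOn (fun t => ‖σ t - c‖) (Ici (0:ℝ)) :=
    continuous_norm.comp_continuousOn (hσ.sub continuousOn_const)
  -- Step 1: every value r ∈ [r₁, r₂] is attained by |σ t - c| for arbitrarily large t.
  have step1 : ∀ r ∈ Icc r₁ r₂, ∀ T : ℝ, ∃ t, T ≤ t ∧ 0 ≤ t ∧ ‖σ t - c‖ = r := by
    intro r hr T
    obtain ⟨t₁, ht₁, h1⟩ := (frequently_atTop.mp hfr₁) (max T 0)
    obtain ⟨t₂, ht₂, h2⟩ := (frequently_atTop.mp hfr₂) t₁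
    have ht₁0 : (0:ℝ) ≤ t₁ := le_trans (le_max_right T 0) ht₁
    have hsub : Icc t₁ t₂ ⊆ Ici (0:ℝ) := fun t ht => le_trans ht₁0 ht.1
    have := intermediate_value_Icc ht₂ (hφc.mono hsub)
    have hrmem : r ∈ Icc (‖σ t₁ - c‖) (‖σ t₂ - c‖) :=
      ⟨le_of_lt (lt_of_lt_of_le h1 hr.1), le_of_lt (lt_of_le_of_lt hr.2 h2)⟩
    obtain ⟨t, ht, hteq⟩ := this hrmem
    exact ⟨t, le_trans (le_trans (le_max_left T 0) ht₁) ht.1, le_trans ht₁0 ht.1, hteq⟩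
  -- Step 2: for each r ∈ [r₁, r₂] there is w with |w - c| = r and f w = v.
  have step2 : ∀ r ∈ Icc r₁ r₂, ∃ w, ‖w - c‖ = r ∧ f w = v := by
    intro r hr
    choose t ht1 _ ht3 using fun k : ℕ => step1 r hr k
    have hmem : ∀ k, σ (t k) ∈ Metric.sphere c r := by
      intro k; simp [Metric.mem_sphere, Complex.dist_eq, ht3 k]
    obtain ⟨w, hw, ψ, hψ, hconv⟩ := (isCompact_sphere c r).tendsto_subseq hmem
    have htψ : Tendsto (fun k => t (ψ k)) atTop atTop := by
      apply tendsto_atTop_mono (fun k => le_trans (Nat.cast_le.mpr (hψ.le_apply)) (ht1 (ψ k)))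
      exact tendsto_natCast_atTop_atTop
    have h1 : Tendsto (fun k => f (σ (t (ψ k)))) atTop (𝓝 (f w)) :=
      (hf.continuous.tendsto w).comp hconv
    have h2 : Tendsto (fun k => f (σ (t (ψ k)))) atTop (𝓝 v) := hv.comp htψ
    refine ⟨w, ?_, tendsto_nhds_unique h1 h2⟩
    simpa [Complex.dist_eq] using hw
  -- Step 3: the set where f = v with modulus in [r₁,r₂] around c is infinite.
  set T : Set ℂ := {w | f w = v ∧ ‖w - c‖ ∈ Icc r₁ r₂} with hT
  have hTinf : T.Infinite := by
    have : Infinite (Icc r₁ r₂) := Set.Icc.infinite h12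
    set u : Icc r₁ r₂ → ℂ := fun r => (step2 r r.2).choose with hu
    have hu1 : ∀ r : Icc r₁ r₂, ‖u r - c‖ = r := fun r => (step2 r r.2).choose_spec.1
    have hu2 : ∀ r : Icc r₁ r₂, f (u r) = v := fun r => (step2 r r.2).choose_spec.2
    refine Set.infinite_of_injective_forall_mem (f := u) ?_ ?_
    · intro a b hab
      have := (hu1 a).symm.trans (by rw [hab, hu1 b])
      exact Subtype.ext (by exact_mod_cast this)
    · intro r; exact ⟨hu2 r, by rw [hu1 r]; exact r.2⟩
  -- Step 4: T sits inside a compact set, so has an accumulation point.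
  have hTsub : T ⊆ Metric.closedBall c r₂ ∩ {w | f w = v} := by
    rintro w ⟨hw1, hw2⟩
    exact ⟨by simpa [Metric.mem_closedBall, Complex.dist_eq] using hw2.2, hw1⟩
  have hK : IsCompact (Metric.closedBall c r₂ ∩ {w | f w = v}) :=
    (isCompact_closedBall c r₂).inter_right (isClosed_eq hf.continuous continuous_const)
  obtain ⟨z₀, -, hz₀⟩ := hTinf.exists_accPt_of_subset_isCompact hK hTsub
  -- Step 5: identity theorem.
  have hfreq : ∃ᶠ z in 𝓝[≠] z₀, f z = v := by
    rw [frequently_nhdsWithin_iff]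
    exact (accPt_iff_frequently.mp hz₀).mono fun z hz => ⟨hz.2.1, hz.1⟩
  have heq : EqOn f (fun _ => v) univ :=
    AnalyticOnNhd.eqOn_of_preconnected_of_frequently_eq
      (hf.differentiableOn.analyticOnNhd isOpen_univ) analyticOnNhd_const
      isPreconnected_univ (mem_univ z₀) hfreq
  exact fun z => heq (mem_univ z)

lemma asymptoticValues_comp {f h : ℂ → ℂ} (hf : Differentiable ℂ f)
    (hfn : ∃ a b : ℂ, f a ≠ f b) (hh : Continuous h) :
    asymptoticValues (f ∘ h) ⊆ asymptoticValues f ∪ f '' asymptoticValues h := by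
  rintro v ⟨γ, hγc, hginf, hγv⟩
  set σ : ℝ → ℂ := fun t => h (γ t) with hσdef
  have hσc : ContinuousOn σ (Ici 0) := hh.comp_continuousOn hγc
  have hfσv : Tendsto (fun t => f (σ t)) atTop (𝓝 v) := hγv
  have hnc : ¬ ∀ z, f z = v := by
    intro hc
    obtain ⟨a, b, hab⟩ := hfn
    exact hab ((hc a).trans (hc b).symm)
  by_cases hT : Tendsto (fun t => ‖σ t‖) atTop atTop
  · exact Or.inl ⟨σ, hσc, hT, hfσv⟩
  rw [tendsto_atTop] at hT
  push_neg at hT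
  obtain ⟨R, hR⟩ := hT
  have hfreqR : ∃ᶠ t in atTop, ‖σ t‖ < R :=
    (Filter.not_eventually.mp hR).mono fun t ht => not_not.mp ht
  by_cases hB : ∃ M, ∀ᶠ t in atTop, ‖σ t‖ ≤ M
  · obtain ⟨M, hM⟩ := hB
    have hmap : Filter.map σ atTop ≤ 𝓟 (Metric.closedBall 0 M) := by
      rw [Filter.le_principal_iff, Filter.mem_map]
      exact hM.mono fun t ht => by
        simpa [Metric.mem_closedBall, Complex.dist_eq] using ht
    obtain ⟨w₀, -, hw₀⟩ := (isCompact_closedBall (0:ℂ) M).exists_clusterPt hmap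
    by_cases huniq : ∀ w, ClusterPt w (Filter.map σ atTop) → w = w₀
    · -- unique cluster point: σ converges to w₀
      have hconv : Tendsto σ atTop (𝓝 w₀) := by
        by_contra hnc2
        rw [Filter.tendsto_def] at hnc2
        push_neg at hnc2
        obtain ⟨U, hU, hUfr⟩ := hnc2
        obtain ⟨V, hVU, hVopen, hw₀V⟩ := mem_nhds_iff.mp hU
        have hfr : ∃ᶠ t in atTop, σ t ∈ Metric.closedBall 0 M ∩ Vᶜ := by
          refine ((Filter.not_eventually.mp hUfr).and_eventually hM).mono ?_
          rintro t ⟨ht1, ht2⟩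
          exact ⟨by simpa [Metric.mem_closedBall, Complex.dist_eq] using ht2,
            fun hmem => ht1 (hVU hmem)⟩
        have hne : (Filter.map σ atTop ⊓ 𝓟 (Metric.closedBall 0 M ∩ Vᶜ)).NeBot :=
          Filter.frequently_iff_neBot.mp (Filter.frequently_map.mpr hfr)
        have hcpt : IsCompact (Metric.closedBall (0:ℂ) M ∩ Vᶜ) :=
          (isCompact_closedBall 0 M).inter_right hVopen.isClosed_compl
        obtain ⟨w₁, hw₁mem, hw₁⟩ := hcpt.exists_clusterPt (f := Filter.map σ atTop ⊓ 𝓟 (Metric.closedBall 0 M ∩ Vᶜ)) inf_le_right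
        have := huniq w₁ (hw₁.mono inf_le_left)
        exact hw₁mem.2 (this ▸ hw₀V)
      refine Or.inr ⟨w₀, ⟨γ, hγc, hginf, hconv⟩, ?_⟩
      exact tendsto_nhds_unique ((hf.continuous.tendsto w₀).comp hconv) hfσv
    · push_neg at huniq
      obtain ⟨w₁, hw₁, hne⟩ := huniq
      set d := ‖w₁ - w₀‖ with hd
      have hdpos : 0 < d := by
        rw [hd]
        exact norm_pos_iff.mpr (sub_ne_zero.mpr hne)
      have hfr1 : ∃ᶠ t in atTop, ‖σ t - w₀‖ < d/3 := by
        have := (mapClusterPt_iff_frequently.mp hw₀) (Metric.ball w₀ (d/3)) (Metric.ball_mem_nhds _ (by linarith))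
        exact this.mono fun t ht => by simpa [Metric.mem_ball, Complex.dist_eq] using ht
      have hfr2 : ∃ᶠ t in atTop, d/2 < ‖σ t - w₀‖ := by
        have := (mapClusterPt_iff_frequently.mp hw₁) (Metric.ball w₁ (d/3)) (Metric.ball_mem_nhds _ (by linarith))
        refine this.mono fun t ht => ?_
        have ht' : ‖σ t - w₁‖ < d/3 := by
          simpa [Metric.mem_ball, Complex.dist_eq] using ht
        have htri : d ≤ ‖σ t - w₀‖ + ‖σ t - w₁‖ := by
          calc d = ‖w₁ - w₀‖ := hd
            _ = ‖(σ t - w₀) - (σ t - w₁)‖ := by ring_nf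
            _ ≤ ‖σ t - w₀‖ + ‖σ t - w₁‖ := by
              simpa using norm_sub_le (σ t - w₀) (σ t - w₁)
        linarith
      exact absurd (const_of_oscillation hf hσc hfσv w₀ (by linarith) hfr1 hfr2) hnc
  · push_neg at hB
    have hfr2 : ∃ᶠ t in atTop, max R 0 + 1 < ‖σ t - 0‖ := by
      refine (Filter.not_eventually.mp (hB (max R 0 + 1))).mono fun t ht => ?_
      simpa [not_le] using ht
    have hfr1 : ∃ᶠ t in atTop, ‖σ t - 0‖ < R := by
      simpa using hfreqR
    have hlt : R < max R 0 + 1 := lt_of_le_of_lt (le_max_left R 0) (lt_add_one _)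
    exact absurd (const_of_oscillation hf hσc hfσv 0 hlt hfr1 hfr2) hnc

lemma criticalValues_comp {f h : ℂ → ℂ} (hf : Differentiable ℂ f) (hh : Differentiable ℂ h) :
    criticalValues (f ∘ h) ⊆ criticalValues f ∪ f '' criticalValues h := by
  rintro v ⟨w, hd, hv⟩
  rw [deriv_comp (x := w) (hf (h w)) (hh w)] at hd
  rcases mul_eq_zero.mp hd with h1 | h2
  · exact Or.inl ⟨h w, h1, hv⟩
  · exact Or.inr ⟨h w, ⟨w, h2, rfl⟩, hv⟩

lemma singInv_comp_s9 {f h : ℂ → ℂ} (hf : Differentiable ℂ f) (hfn : ∃ a b : ℂ, f a ≠ f b)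
    (hh : Differentiable ℂ h) :
    SingInv (f ∘ h) ⊆ SingInv f ∪ closure (f '' SingInv h) := by
  have h1 : criticalValues (f ∘ h) ∪ asymptoticValues (f ∘ h) ⊆
      (criticalValues f ∪ asymptoticValues f) ∪
        f '' (criticalValues h ∪ asymptoticValues h) := by
    refine union_subset ?_ ?_
    · refine (criticalValues_comp hf hh).trans ?_
      refine union_subset_union subset_union_left (image_mono (f := f) subset_union_left)
    · refine (asymptoticValues_comp hf hfn hh.continuous).trans ?_
      refine union_subset_union subset_union_right (image_mono (f := f) subset_union_right)
  calc SingInv (f ∘ h)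
      ⊆ closure ((criticalValues f ∪ asymptoticValues f) ∪
          f '' (criticalValues h ∪ asymptoticValues h)) := closure_mono h1
    _ = closure (criticalValues f ∪ asymptoticValues f) ∪
          closure (f '' (criticalValues h ∪ asymptoticValues h)) := closure_union
    _ ⊆ SingInv f ∪ closure (f '' SingInv h) :=
        union_subset_union subset_rfl (closure_mono (image_mono (f := f) subset_closure))

lemma singInv_id : SingInv (id : ℂ → ℂ) = ∅ := by
  have h1 : criticalValues (id : ℂ → ℂ) = ∅ := by
    ext v
    simp only [criticalValues, mem_setOf_eq, mem_empty_iff_false, iff_false, not_exists]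
    intro w hw
    rw [deriv_id] at hw
    exact absurd hw.1 one_ne_zero
  have h2 : asymptoticValues (id : ℂ → ℂ) = ∅ := by
    ext v
    simp only [asymptoticValues, mem_setOf_eq, mem_empty_iff_false, iff_false, not_exists]
    rintro γ ⟨-, hinf, hv⟩
    have : Tendsto (fun t => ‖γ t‖) atTop (𝓝 ‖v‖) :=
      (continuous_norm.tendsto v).comp hv
    exact not_tendsto_atTop_of_tendsto_nhds this hinf
  rw [SingInv, h1, h2, empty_union, closure_empty]

/-- For pairwise permutable transcendental entire functions
`g_1, …, g_n` of bounded type with `g_i(Sing(g_j⁻¹)) ⊆ Sing(g_j⁻¹)` for `i ≠ j`,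
one has `P(g_1 ∘ ⋯ ∘ g_n) ⊆ ⋃_i P(g_i)`. -/
theorem postSing_multi_comp_subset
    (n : ℕ) (hn : 1 ≤ n) (g : Fin n → ℂ → ℂ)
    (htrans : ∀ i, TranscendentalEntire (g i))
    (hbd : ∀ i, BoundedType (g i))
    (hperm : ∀ i j, g i ∘ g j = g j ∘ g i)
    (hsing : ∀ i j, i ≠ j → g i '' SingInv (g j) ⊆ SingInv (g j)) :
    postSing ((List.ofFn g).foldr (· ∘ ·) id) ⊆ ⋃ i : Fin n, postSing (g i) := by
  have hdiff : ∀ i, Differentiable ℂ (g i) := fun i => (htrans i).1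
  have hnc : ∀ i, ∃ a b : ℂ, g i a ≠ g i b := by
    intro i
    by_contra hcon
    push_neg at hcon
    exact (htrans i).2 ⟨Polynomial.C (g i 0), fun z => by
      rw [Polynomial.eval_C, hcon z 0]⟩
  set A : Fin n → Set ℂ := fun i => ⋃ k : ℕ, (g i)^[k] '' SingInv (g i) with hA
  set B : Fin n → Set ℂ := fun i => closure (A i) with hB
  have hBpost : ∀ i, B i = postSing (g i) := fun i => rfl
  -- each B i is invariant under every g j
  have hAinv : ∀ j i, g j '' A i ⊆ A i := by
    intro j i
    rintro _ ⟨y, hy, rfl⟩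
    simp only [hA, mem_iUnion, mem_image] at hy ⊢
    obtain ⟨k, x, hx, rfl⟩ := hy
    by_cases hji : j = i
    · subst hji
      exact ⟨k + 1, x, hx, Function.iterate_succ_apply' (g j) k x⟩
    · refine ⟨k, g j x, hsing j i hji ⟨x, hx, rfl⟩, ?_⟩
      have hcomm : Function.Commute (g j) (g i) := fun x => congrFun (hperm j i) x
      exact ((hcomm.iterate_right k) x).symm
  have hBinv : ∀ j i, g j '' B i ⊆ B i := by
    intro j i
    calc g j '' closure (A i) ⊆ closure (g j '' A i) :=
          image_closure_subset_closure_image (hdiff j).continuous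
      _ ⊆ closure (A i) := closure_mono (hAinv j i)
  have hBclosed : IsClosed (⋃ i, B i) := isClosed_iUnion_of_finite fun i => isClosed_closure
  have hSsubB : ∀ i, SingInv (g i) ⊆ B i := by
    intro i
    refine subset_trans ?_ subset_closure
    have := subset_iUnion (fun k : ℕ => (g i)^[k] '' SingInv (g i)) 0
    simpa [hA] using this
  -- induction along the list of generators
  have hlist : ∀ l : List (Fin n),
      Differentiable ℂ ((l.map g).foldr (· ∘ ·) id) ∧
      SingInv ((l.map g).foldr (· ∘ ·) id) ⊆ ⋃ i, B i ∧
      ∀ i, ((l.map g).foldr (· ∘ ·) id) '' B i ⊆ B i := by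
    intro l
    induction l with
    | nil =>
      refine ⟨differentiable_id, ?_, fun i => by simp⟩
      simp [singInv_id]
    | cons a l ih =>
      obtain ⟨ihd, ihs, ihB⟩ := ih
      have hfold : (((a :: l).map g).foldr (· ∘ ·) id) =
          g a ∘ ((l.map g).foldr (· ∘ ·) id) := rfl
      rw [hfold]
      refine ⟨(hdiff a).comp ihd, ?_, ?_⟩
      · refine (singInv_comp_s9 (hdiff a) (hnc a) ihd).trans (union_subset ?_ ?_)
        · exact (hSsubB a).trans (subset_iUnion B a)
        · refine closure_minimal ?_ hBclosed
          refine (image_mono (f := g a) ihs).trans ?_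
          rw [image_iUnion]
          exact iUnion_mono fun i => (hBinv a i)
      · intro i
        rw [Set.image_comp]
        exact ((image_mono (f := g a) (ihB i))).trans (hBinv a i)
  have hofn : (List.ofFn g) = (List.finRange n).map g := List.ofFn_eq_map
  rw [hofn]
  obtain ⟨hFd, hFs, hFB⟩ := hlist (List.finRange n)
  set F := (((List.finRange n).map g).foldr (· ∘ ·) id) with hF
  have hiter : ∀ (m : ℕ) i, F^[m] '' B i ⊆ B i := by
    intro m i
    exact Set.mapsTo_iff_image_subset.mp ((Set.mapsTo_iff_image_subset.mpr (hFB i)).iterate m)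
  refine closure_minimal ?_ hBclosed
  refine iUnion_subset fun m => ?_
  calc F^[m] '' SingInv F ⊆ F^[m] '' ⋃ i, B i := image_mono hFs
    _ = ⋃ i, F^[m] '' B i := image_iUnion
    _ ⊆ ⋃ i, B i := iUnion_mono fun i => hiter m i
    _ = ⋃ i, postSing (g i) := rfl
end
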